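/- Let G=(W,E) be a finite simple graph with E nonempty, let k ≥ 2 be a natural number, and fix an orientation (x_e, y_e) of each edge e ∈ E. Construct the parliamentary election whose running parties are p_1, o_1, and one party s_w for each vertex w ∈ W, and whose voters are: for each edge e ∈ E, one voter ranking s_{x_e} ≻ s_{y_e} ≻ p_1 ≻ o_1 ≻ (all remaining parties in some fixed order); |E| voters ranking p_1 ≻ o_1 ≻ (all remaining parties); and |E| + k(k−1)/2 voters ranking o_1 first (then all remaining parties). Let the coalition be C = {p_1} ∪ {s_w : w ∈ W} and let the electoral threshold be τ = (|E| + k(k−1)/2) / (3|E| + k(k−1)/2), so a party is active iff it receives at least |E| + k(k−1)/2 votes. Then G contains a k-clique if and only if there exists a set P⁻ ⊆ C with |P⁻| ≤ k such that, in the election obtained by deleting the parties of P⁻, the active-vote fraction of C ∖ P⁻ is at least 1/2. -/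
import Mathlib

open scoped Classical

section Defs

variable {U V : Type*}

/-- `p` is the most-preferred member of the running set `P` under the linear order `L`
(greater means more preferred). -/
def TopOf (L : LinearOrder U) (P : Finset U) (p : U) : Prop :=
  p ∈ P ∧ ∀ q ∈ P, q ≠ p → L.lt q p

/-- Number of voters whose most-preferred running party lies in `A`. -/
noncomputable def votes [Fintype V] (pref : V → LinearOrder U) (P A : Finset U) : ℕ :=
  (Finset.univ.filter fun v : V => ∃ p ∈ A, TopOf (pref v) P p).card

/-- Fraction of voters whose most-preferred running party lies in `A`. -/
noncomputable def voteFrac [Fintype V] (pref : V → LinearOrder U) (P A : Finset U) : ℚ :=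
  (votes pref P A : ℚ) / (Fintype.card V : ℚ)

/-- Total number of votes received by active parties (receiving at least `T` votes) among `A`. -/
noncomputable def activeVotes [Fintype V] (pref : V → LinearOrder U) (P : Finset U) (T : ℕ)
    (A : Finset U) : ℕ :=
  ∑ p ∈ A, if T ≤ votes pref P {p} then votes pref P {p} else 0

/-- Active-vote fraction of `A`. -/
noncomputable def activeFrac [Fintype V] (pref : V → LinearOrder U) (P : Finset U) (T : ℕ)
    (A : Finset U) : ℚ :=
  (activeVotes pref P T A : ℚ) / (activeVotes pref P T P : ℚ)

/-- The linear order `L` respects the tier function `t` (smaller tier = more preferred). -/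
def PrefTiers (L : LinearOrder U) (t : U → ℕ) : Prop :=
  ∀ a b : U, t a < t b → L.lt b a

/-- Pairs `(p, q)` with `p ≻ q` under `L` and `q ≻ p` under `L'`. -/
noncomputable def invPairs [Fintype U] (L L' : LinearOrder U) : Finset (U × U) :=
  Finset.univ.filter fun pq : U × U => L.lt pq.2 pq.1 ∧ L'.lt pq.1 pq.2

/-- Swap-bribery cost of replacing `L` by `L'` with swap-price function `sw`. -/
noncomputable def swapCost [Fintype U] (L L' : LinearOrder U) (sw : U → U → ℝ) : ℝ :=
  ∑ pq ∈ invPairs L L', sw pq.1 pq.2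

end Defs

section Aux
variable {U : Type*}

lemma topOf_unique {L : LinearOrder U} {P : Finset U} {p q : U}
    (hp : TopOf L P p) (hq : TopOf L P q) : p = q := by
  letI := L
  by_contra h
  exact lt_asymm (hq.2 p hp.1 h) (hp.2 q hq.1 (Ne.symm h))

lemma topOf_of_tiers {L : LinearOrder U} {t : U → ℕ} (ht : PrefTiers L t)
    {P : Finset U} {p : U} (hp : p ∈ P) (hmin : ∀ q ∈ P, q ≠ p → t p < t q) :
    TopOf L P p :=
  ⟨hp, fun q hq hne => ht _ _ (hmin q hq hne)⟩

lemma votes_eq_card_top [DecidableEq U] {V : Type*} [Fintype V] (pref : V → LinearOrder U) (P : Finset U)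
    (tp : V → U) (htp : ∀ v, TopOf (pref v) P (tp v)) (q : U) :
    votes pref P {q} = (Finset.univ.filter fun v => tp v = q).card := by
  unfold votes
  congr 1
  apply Finset.filter_congr
  intro v _
  constructor
  · rintro ⟨p, hpq, hp⟩
    rw [Finset.mem_singleton] at hpq
    subst hpq
    exact topOf_unique (htp v) hp
  · rintro rfl
    exact ⟨tp v, Finset.mem_singleton_self _, htp v⟩

lemma card_filter_sum {α β : Type*} [Fintype α] [Fintype β] (p : α ⊕ β → Prop)
    [DecidablePred p] :
    (Finset.univ.filter p).card
      = (Finset.univ.filter fun a => p (Sum.inl a)).card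
        + (Finset.univ.filter fun b => p (Sum.inr b)).card := by
  rw [Finset.card_filter, Finset.card_filter, Finset.card_filter, Fintype.sum_sum_type]

lemma card_filter_subtype {α : Type*} (s : Finset α) (p : α → Prop) [DecidablePred p] :
    (Finset.univ.filter fun e : ↥s => p ↑e).card = (s.filter p).card := by
  rw [Finset.card_filter, Finset.univ_eq_attach,
    Finset.sum_attach s (fun a => if p a then 1 else 0), ← Finset.card_filter]

lemma sym2_filter_isDiag {α : Type*} [DecidableEq α] (K : Finset α) :
    K.sym2.filter (fun e => e.IsDiag) = K.image (fun a => s(a, a)) := by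
  ext z
  induction z using Sym2.ind with
  | _ a b =>
    simp only [Finset.mem_filter, Finset.mk_mem_sym2_iff, Sym2.isDiag_iff_proj_eq,
      Finset.mem_image]
    constructor
    · rintro ⟨⟨ha, _⟩, h⟩
      exact ⟨a, ha, by rw [show a = b from h]⟩
    · rintro ⟨c, hc, hcz⟩
      rw [Sym2.eq_iff] at hcz
      rcases hcz with ⟨rfl, rfl⟩ | ⟨rfl, rfl⟩ <;> exact ⟨⟨hc, hc⟩, rfl⟩

lemma card_sym2_nondiag {α : Type*} [DecidableEq α] (K : Finset α) :
    (K.sym2.filter fun e => ¬ e.IsDiag).card = K.card * (K.card - 1) / 2 := by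
  have h := Finset.card_filter_add_card_filter_not (s := K.sym2)
    (p := fun e => e.IsDiag)
  rw [Finset.card_sym2] at h
  have hdiag : (K.sym2.filter (fun e => e.IsDiag)).card = K.card := by
    rw [sym2_filter_isDiag, Finset.card_image_of_injective]
    intro a b hab
    rw [Sym2.eq_iff] at hab
    tauto
  have hch : Nat.choose (K.card + 1) 2 = (K.card + 1) * K.card / 2 := by
    rw [Nat.choose_two_right]
    simp
  obtain ⟨c, hc⟩ := Nat.even_mul_succ_self K.card
  obtain ⟨c', hc'⟩ := Nat.even_mul_pred_self K.card
  have hrel : K.card * (K.card - 1) + 2 * K.card = K.card * (K.card + 1) := by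
    rcases Nat.eq_zero_or_pos K.card with h0 | h0
    · simp [h0]
    · have h4 : K.card - 1 + 2 = K.card + 1 := by omega
      calc K.card * (K.card - 1) + 2 * K.card = K.card * (K.card - 1 + 2) := by ring
        _ = K.card * (K.card + 1) := by rw [h4]
  have hcomm : (K.card + 1) * K.card = K.card * (K.card + 1) := Nat.mul_comm _ _
  rw [hch, hcomm, hdiag] at h
  set d := K.card
  set A := d * (d - 1) with hA
  set B := d * (d + 1) with hB
  clear_value A B
  omega

lemma edges_within_subset {W : Type*} [Fintype W] [DecidableEq W]
    (G : SimpleGraph W) [DecidableRel G.Adj]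
    (x y : Sym2 W → W) (hxy : ∀ e ∈ G.edgeFinset, e = s(x e, y e)) (D : Finset W) :
    G.edgeFinset.filter (fun e => x e ∈ D ∧ y e ∈ D) ⊆ D.sym2.filter fun e => ¬ e.IsDiag := by
  intro e he
  rw [Finset.mem_filter] at he ⊢
  obtain ⟨heE, hx, hy⟩ := he
  refine ⟨?_, G.not_isDiag_of_mem_edgeSet (SimpleGraph.mem_edgeFinset.mp heE)⟩
  rw [hxy e heE]
  exact Finset.mk_mem_sym2_iff.mpr ⟨hx, hy⟩

lemma clique_edges_eq {W : Type*} [Fintype W] [DecidableEq W]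
    (G : SimpleGraph W) [DecidableRel G.Adj]
    (x y : Sym2 W → W) (hxy : ∀ e ∈ G.edgeFinset, e = s(x e, y e)) {K : Finset W}
    (hK : G.IsClique (K : Set W)) :
    G.edgeFinset.filter (fun e => x e ∈ K ∧ y e ∈ K) = K.sym2.filter fun e => ¬ e.IsDiag := by
  refine Finset.Subset.antisymm (edges_within_subset G x y hxy K) ?_
  intro e he
  rw [Finset.mem_filter] at he ⊢
  obtain ⟨hs, hd⟩ := he
  revert hs hd
  induction e using Sym2.ind with
  | _ a b =>
    intro hs hd
    rw [Finset.mk_mem_sym2_iff] at hs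
    obtain ⟨ha, hb⟩ := hs
    have hab : a ≠ b := fun h => hd (by rw [h]; exact Sym2.mk_isDiag_iff.mpr rfl)
    have hadj : G.Adj a b := hK (Finset.mem_coe.mpr ha) (Finset.mem_coe.mpr hb) hab
    have heE : s(a, b) ∈ G.edgeFinset := SimpleGraph.mem_edgeFinset.mpr hadj
    refine ⟨heE, ?_⟩
    have h2 := hxy _ heE
    rw [Sym2.eq_iff] at h2
    rcases h2 with ⟨h1, h2⟩ | ⟨h1, h2⟩ <;> constructor <;> simp [← h1, ← h2, ha, hb]

lemma arith_d_eq_k {d k : ℕ} (hk : 2 ≤ k) (hdk : d ≤ k)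
    (h : k * (k - 1) / 2 ≤ d * (d - 1) / 2) : d = k := by
  by_contra hne
  have hd : d ≤ k - 1 := by omega
  have h1 : d * (d - 1) ≤ (k - 1) * (k - 2) := Nat.mul_le_mul hd (by omega)
  obtain ⟨c, hc⟩ := Nat.even_mul_pred_self (k - 1)
  obtain ⟨c', hc'⟩ := Nat.even_mul_pred_self k
  have h2 : (k - 1) * (k - 1 - 1) + 2 * (k - 1) = k * (k - 1) := by
    have h5 : k - 1 - 1 + 2 = k := by omega
    calc (k - 1) * (k - 1 - 1) + 2 * (k - 1) = (k - 1) * (k - 1 - 1 + 2) := by ring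
    _ = (k - 1) * k := by rw [h5]
    _ = k * (k - 1) := Nat.mul_comm _ _
  have h3 : k - 1 - 1 = k - 2 := by omega
  rw [h3] at hc h2
  set A := d * (d - 1)
  set B := k * (k - 1)
  set C := (k - 1) * (k - 2)
  clear_value A B C
  omega

end Aux

/-- Election (deleting coalition parties, J objective, threshold
$τ = (|E|+k(k-1)/2)/(3|E|+k(k-1)/2)$, i.e. active iff at least $|E|+k(k-1)/2$ votes):
parties are $p_1$ (= `Sum.inr 0`), $o_1$ (= `Sum.inr 1`), one party $s_w$ per vertex;
voters: one per edge $e$ ranking $s_{x_e} ≻ s_{y_e} ≻ p_1 ≻ o_1 ≻$ rest, $|E|$ voters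
ranking $p_1 ≻ o_1 ≻$ rest, and $|E|+k(k-1)/2$ voters ranking $o_1$ first.  The coalition
is $C = \{p_1\} ∪ \{s_w\}$.  Then $G$ has a $k$-clique iff at most $k$ coalition parties can
be deleted so that the coalition's active-vote fraction is at least $1/2$. -/
theorem dcp_J_threshold_clique_reduction
    {W : Type*} [Fintype W] [DecidableEq W]
    (G : SimpleGraph W) [DecidableRel G.Adj] (hE : G.edgeFinset.Nonempty)
    (k : ℕ) (hk : 2 ≤ k)
    (x y : Sym2 W → W) (hxy : ∀ e ∈ G.edgeFinset, e = s(x e, y e))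
    (pref : (↥G.edgeFinset ⊕ (↥G.edgeFinset ⊕ Fin (G.edgeFinset.card + k * (k - 1) / 2))) →
      LinearOrder (W ⊕ Fin 2))
    (hprefA : ∀ e : ↥G.edgeFinset, PrefTiers (pref (Sum.inl e))
      (Sum.elim (fun w => if w = x ↑e then (0 : ℕ) else if w = y ↑e then 1 else 4)
        (fun j : Fin 2 => if j = 0 then 2 else 3)))
    (hprefB : ∀ e : ↥G.edgeFinset, PrefTiers (pref (Sum.inr (Sum.inl e)))
      (Sum.elim (fun _ => (2 : ℕ)) (fun j : Fin 2 => if j = 0 then 0 else 1)))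
    (hprefC : ∀ i : Fin (G.edgeFinset.card + k * (k - 1) / 2),
      PrefTiers (pref (Sum.inr (Sum.inr i)))
        (Sum.elim (fun _ => (1 : ℕ)) (fun j : Fin 2 => if j = 1 then 0 else 1))) :
    (∃ K : Finset W, K.card = k ∧ G.IsClique (K : Set W)) ↔
    (∃ Pm : Finset (W ⊕ Fin 2),
      Pm ⊆ insert (Sum.inr 0) (Finset.univ.image Sum.inl) ∧ Pm.card ≤ k ∧
      (1 : ℚ) / 2 ≤
        activeFrac pref (Finset.univ \ Pm) (G.edgeFinset.card + k * (k - 1) / 2)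
          (insert (Sum.inr 0) (Finset.univ.image Sum.inl) \ Pm)) := by
  classical
  have hK2 : 1 ≤ k * (k - 1) / 2 := by
    have h2 : 2 * 1 ≤ k * (k - 1) := Nat.mul_le_mul hk (by omega)
    omega
  have hm1 : 1 ≤ G.edgeFinset.card := Finset.card_pos.mpr hE
  have key : ∀ Pm : Finset (W ⊕ Fin 2),
      Pm ⊆ insert (Sum.inr 0) (Finset.univ.image Sum.inl) →
      ((1 : ℚ) / 2 ≤ activeFrac pref (Finset.univ \ Pm) (G.edgeFinset.card + k * (k - 1) / 2)
          (insert (Sum.inr 0) (Finset.univ.image Sum.inl) \ Pm) ↔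
        (Sum.inr 0 ∉ Pm ∧ k * (k - 1) / 2 ≤
          (Finset.univ.filter fun e : ↥G.edgeFinset =>
            Sum.inl (x ↑e) ∈ Pm ∧ Sum.inl (y ↑e) ∈ Pm).card)) := by
    intro Pm hPm
    have hC1 : (Sum.inr 1 : W ⊕ Fin 2) ∉ insert (Sum.inr 0) (Finset.univ.image Sum.inl) := by
      simp
    have h1Pm : Sum.inr 1 ∉ Pm := fun h => hC1 (hPm h)
    have hmemP : ∀ u : W ⊕ Fin 2, u ∈ Finset.univ \ Pm ↔ u ∉ Pm := fun u => by
      simp [Finset.mem_sdiff]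
    have hP1 : (Sum.inr 1 : W ⊕ Fin 2) ∈ Finset.univ \ Pm := (hmemP _).mpr h1Pm
    set tp : (↥G.edgeFinset ⊕ (↥G.edgeFinset ⊕ Fin (G.edgeFinset.card + k * (k - 1) / 2))) →
        (W ⊕ Fin 2) :=
      Sum.elim
        (fun e => if Sum.inl (x ↑e) ∈ Pm then
            (if Sum.inl (y ↑e) ∈ Pm then
              (if Sum.inr 0 ∈ Pm then Sum.inr 1 else Sum.inr 0) else Sum.inl (y ↑e))
          else Sum.inl (x ↑e))
        (Sum.elim (fun _ => if Sum.inr 0 ∈ Pm then Sum.inr 1 else Sum.inr 0)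
          (fun _ => Sum.inr 1)) with htpdef
    have htp : ∀ v, TopOf (pref v) (Finset.univ \ Pm) (tp v) := by
      rintro (e | e | i)
      · simp only [htpdef, Sum.elim_inl]
        by_cases hx : Sum.inl (x ↑e) ∈ Pm
        · by_cases hy : Sum.inl (y ↑e) ∈ Pm
          · by_cases h0 : (Sum.inr 0 : W ⊕ Fin 2) ∈ Pm
            · rw [if_pos hx, if_pos hy, if_pos h0]
              refine topOf_of_tiers (hprefA e) hP1 ?_
              rintro (w | j) hq hne
              · rw [hmemP] at hq
                have hw1 : w ≠ x ↑e := fun h => hq (h ▸ hx)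
                have hw2 : w ≠ y ↑e := fun h => hq (h ▸ hy)
                simp only [Sum.elim_inl, Sum.elim_inr, if_neg hw1, if_neg hw2]
                norm_num
              · have hj : j = 0 := by
                  fin_cases j
                  · rfl
                  · exact absurd rfl hne
                subst hj
                rw [hmemP] at hq
                exact absurd h0 hq
            · rw [if_pos hx, if_pos hy, if_neg h0]
              refine topOf_of_tiers (hprefA e) ((hmemP _).mpr h0) ?_
              rintro (w | j) hq hne
              · rw [hmemP] at hq
                have hw1 : w ≠ x ↑e := fun h => hq (h ▸ hx)
                have hw2 : w ≠ y ↑e := fun h => hq (h ▸ hy)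
                simp only [Sum.elim_inl, Sum.elim_inr, if_neg hw1, if_neg hw2]
                norm_num
              · have hj : j = 1 := by
                  fin_cases j
                  · exact absurd rfl hne
                  · rfl
                subst hj
                simp only [Sum.elim_inr]
                norm_num
          · rw [if_pos hx, if_neg hy]
            have hyx : y ↑e ≠ x ↑e := fun h => hy (by rw [h]; exact hx)
            refine topOf_of_tiers (hprefA e) ((hmemP _).mpr hy) ?_
            rintro (w | j) hq hne
            · rw [hmemP] at hq
              have hw1 : w ≠ x ↑e := fun h => hq (h ▸ hx)
              have hw2 : w ≠ y ↑e := fun h => hne (by rw [h])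
              simp only [Sum.elim_inl, if_neg hw1, if_neg hw2, if_neg hyx, if_pos rfl]
              norm_num
            · simp only [Sum.elim_inl, Sum.elim_inr, if_neg hyx, if_pos rfl]
              split_ifs <;> norm_num
        · rw [if_neg hx]
          refine topOf_of_tiers (hprefA e) ((hmemP _).mpr hx) ?_
          rintro (w | j) hq hne
          · have hw1 : w ≠ x ↑e := fun h => hne (by rw [h])
            simp only [Sum.elim_inl, if_neg hw1, if_pos rfl]
            split_ifs <;> norm_num
          · simp only [Sum.elim_inl, Sum.elim_inr, if_pos rfl]
            split_ifs <;> norm_num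
      · simp only [htpdef, Sum.elim_inr, Sum.elim_inl]
        by_cases h0 : (Sum.inr 0 : W ⊕ Fin 2) ∈ Pm
        · rw [if_pos h0]
          refine topOf_of_tiers (hprefB e) hP1 ?_
          rintro (w | j) hq hne
          · simp only [Sum.elim_inl, Sum.elim_inr]
            norm_num
          · have hj : j = 0 := by
              fin_cases j
              · rfl
              · exact absurd rfl hne
            subst hj
            rw [hmemP] at hq
            exact absurd h0 hq
        · rw [if_neg h0]
          refine topOf_of_tiers (hprefB e) ((hmemP _).mpr h0) ?_
          rintro (w | j) hq hne
          · simp only [Sum.elim_inl, Sum.elim_inr]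
            norm_num
          · have hj : j = 1 := by
              fin_cases j
              · exact absurd rfl hne
              · rfl
            subst hj
            simp only [Sum.elim_inr]
            norm_num
      · simp only [htpdef, Sum.elim_inr]
        refine topOf_of_tiers (hprefC i) hP1 ?_
        rintro (w | j) hq hne
        · simp only [Sum.elim_inl, Sum.elim_inr]
          norm_num
        · have hj : j = 0 := by
            fin_cases j
            · rfl
            · exact absurd rfl hne
          subst hj
          simp only [Sum.elim_inr]
          norm_num
    have hv := votes_eq_card_top pref (Finset.univ \ Pm) tp htp
    have hcardE : (Finset.univ : Finset ↥G.edgeFinset).card = G.edgeFinset.card := by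
      rw [Finset.card_univ, Fintype.card_coe]
    -- votes for inl w are at most m
    have hvinl : ∀ w : W, votes pref (Finset.univ \ Pm) {Sum.inl w} ≤ G.edgeFinset.card := by
      intro w
      rw [hv, card_filter_sum, card_filter_sum]
      beta_reduce
      have hB : (Finset.univ.filter fun e : ↥G.edgeFinset =>
          tp (Sum.inr (Sum.inl e)) = Sum.inl w).card = 0 := by
        rw [Finset.card_eq_zero, Finset.filter_eq_empty_iff]
        intro e _
        simp only [htpdef, Sum.elim_inr, Sum.elim_inl]
        split_ifs <;> simp
      have hC : (Finset.univ.filter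
          fun i : Fin (G.edgeFinset.card + k * (k - 1) / 2) =>
          tp (Sum.inr (Sum.inr i)) = Sum.inl w).card = 0 := by
        rw [Finset.card_eq_zero, Finset.filter_eq_empty_iff]
        intro i _
        simp [htpdef]
      rw [hB, hC]
      simpa using Finset.card_filter_le (Finset.univ : Finset ↥G.edgeFinset) _
    have hT : G.edgeFinset.card < G.edgeFinset.card + k * (k - 1) / 2 := by omega
    have hf_inl : ∀ w : W,
        (if G.edgeFinset.card + k * (k - 1) / 2 ≤
            votes pref (Finset.univ \ Pm) {Sum.inl w} then
          votes pref (Finset.univ \ Pm) {Sum.inl w} else 0) = 0 := by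
      intro w
      rw [if_neg]
      have := hvinl w
      omega
    -- votes for o1 is at least T
    have hCcount : (Finset.univ.filter
        fun i : Fin (G.edgeFinset.card + k * (k - 1) / 2) =>
        tp (Sum.inr (Sum.inr i)) = Sum.inr 1).card = G.edgeFinset.card + k * (k - 1) / 2 := by
      have : ∀ i : Fin (G.edgeFinset.card + k * (k - 1) / 2),
          tp (Sum.inr (Sum.inr i)) = Sum.inr 1 := fun i => by simp [htpdef]
      rw [Finset.filter_true_of_mem fun i _ => this i, Finset.card_univ, Fintype.card_fin]
    have hvo1 : G.edgeFinset.card + k * (k - 1) / 2 ≤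
        votes pref (Finset.univ \ Pm) {Sum.inr 1} := by
      rw [hv, card_filter_sum, card_filter_sum]
      beta_reduce
      rw [hCcount]
      omega
    by_cases h0 : (Sum.inr 0 : W ⊕ Fin 2) ∈ Pm
    · -- p1 deleted: coalition active votes are zero
      have hA0 : activeVotes pref (Finset.univ \ Pm) (G.edgeFinset.card + k * (k - 1) / 2)
          (insert (Sum.inr 0) (Finset.univ.image Sum.inl) \ Pm) = 0 := by
        apply Finset.sum_eq_zero
        intro p hp
        rw [Finset.mem_sdiff, Finset.mem_insert] at hp
        obtain ⟨hp1, hp2⟩ := hp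
        rcases hp1 with rfl | hp1
        · exact absurd h0 hp2
        · rw [Finset.mem_image] at hp1
          obtain ⟨w, _, rfl⟩ := hp1
          exact hf_inl w
      unfold activeFrac
      rw [hA0]
      simp only [Nat.cast_zero, zero_div]
      constructor
      · intro h
        norm_num at h
      · rintro ⟨ha, -⟩
        exact absurd h0 ha
    · -- p1 kept
      have hvo1' : votes pref (Finset.univ \ Pm) {Sum.inr 1}
          = G.edgeFinset.card + k * (k - 1) / 2 := by
        rw [hv, card_filter_sum, card_filter_sum]
        beta_reduce
        rw [hCcount]
        have hA : (Finset.univ.filter fun e : ↥G.edgeFinset =>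
            tp (Sum.inl e) = Sum.inr 1).card = 0 := by
          rw [Finset.card_eq_zero, Finset.filter_eq_empty_iff]
          intro e _
          by_cases h1 : Sum.inl (x ↑e) ∈ Pm <;> by_cases h2 : Sum.inl (y ↑e) ∈ Pm <;>
            simp [htpdef, h1, h2, h0, Fin.ext_iff]
        have hB : (Finset.univ.filter fun e : ↥G.edgeFinset =>
            tp (Sum.inr (Sum.inl e)) = Sum.inr 1).card = 0 := by
          rw [Finset.card_eq_zero, Finset.filter_eq_empty_iff]
          intro e _
          simp only [htpdef, Sum.elim_inr, Sum.elim_inl, if_neg h0]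
          simp [Fin.ext_iff]
        rw [hA, hB]
        omega
      have hv0 : votes pref (Finset.univ \ Pm) {Sum.inr 0} = G.edgeFinset.card +
          (Finset.univ.filter fun e : ↥G.edgeFinset =>
            Sum.inl (x ↑e) ∈ Pm ∧ Sum.inl (y ↑e) ∈ Pm).card := by
        rw [hv, card_filter_sum, card_filter_sum]
        beta_reduce
        have hA : (Finset.univ.filter fun e : ↥G.edgeFinset =>
            tp (Sum.inl e) = Sum.inr 0).card
            = (Finset.univ.filter fun e : ↥G.edgeFinset =>
              Sum.inl (x ↑e) ∈ Pm ∧ Sum.inl (y ↑e) ∈ Pm).card := by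
          congr 1
          apply Finset.filter_congr
          intro e _
          by_cases h1 : Sum.inl (x ↑e) ∈ Pm <;> by_cases h2 : Sum.inl (y ↑e) ∈ Pm <;>
            simp [htpdef, h1, h2, h0, Fin.ext_iff]
        have hB : (Finset.univ.filter fun e : ↥G.edgeFinset =>
            tp (Sum.inr (Sum.inl e)) = Sum.inr 0).card = G.edgeFinset.card := by
          have : ∀ e : ↥G.edgeFinset, tp (Sum.inr (Sum.inl e)) = Sum.inr 0 := fun e => by
            simp [htpdef, if_neg h0]
          rw [Finset.filter_true_of_mem fun e _ => this e, hcardE]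
        have hC : (Finset.univ.filter
            fun i : Fin (G.edgeFinset.card + k * (k - 1) / 2) =>
            tp (Sum.inr (Sum.inr i)) = Sum.inr 0).card = 0 := by
          rw [Finset.card_eq_zero, Finset.filter_eq_empty_iff]
          intro i _
          simp [htpdef]
        rw [hA, hB, hC]
        omega
      have h0P : (Sum.inr 0 : W ⊕ Fin 2) ∈ Finset.univ \ Pm := (hmemP _).mpr h0
      have h0A : (Sum.inr 0 : W ⊕ Fin 2) ∈
          insert (Sum.inr 0) (Finset.univ.image Sum.inl) \ Pm :=
        Finset.mem_sdiff.mpr ⟨Finset.mem_insert_self _ _, h0⟩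
      set bad := (Finset.univ.filter fun e : ↥G.edgeFinset =>
        Sum.inl (x ↑e) ∈ Pm ∧ Sum.inl (y ↑e) ∈ Pm).card with hbaddef
      -- coalition active votes
      have hArest : ∀ p ∈ (insert (Sum.inr 0 : W ⊕ Fin 2)
          (Finset.univ.image Sum.inl) \ Pm).erase (Sum.inr 0),
          (if G.edgeFinset.card + k * (k - 1) / 2 ≤
              votes pref (Finset.univ \ Pm) {p} then
            votes pref (Finset.univ \ Pm) {p} else 0) = 0 := by
        intro p hp
        rw [Finset.mem_erase, Finset.mem_sdiff, Finset.mem_insert] at hp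
        obtain ⟨hne, hp1 | hp1, _⟩ := hp
        · exact absurd hp1 hne
        · rw [Finset.mem_image] at hp1
          obtain ⟨w, _, rfl⟩ := hp1
          exact hf_inl w
      have hActA : activeVotes pref (Finset.univ \ Pm)
          (G.edgeFinset.card + k * (k - 1) / 2)
          (insert (Sum.inr 0) (Finset.univ.image Sum.inl) \ Pm)
          = (if G.edgeFinset.card + k * (k - 1) / 2 ≤ G.edgeFinset.card + bad then
              G.edgeFinset.card + bad else 0) := by
        unfold activeVotes
        rw [← Finset.add_sum_erase _ _ h0A, Finset.sum_eq_zero hArest, hv0, add_zero]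
      have hPrest : ∀ p ∈ ((Finset.univ \ Pm).erase (Sum.inr 0)).erase (Sum.inr 1),
          (if G.edgeFinset.card + k * (k - 1) / 2 ≤
              votes pref (Finset.univ \ Pm) {p} then
            votes pref (Finset.univ \ Pm) {p} else 0) = 0 := by
        rintro (w | j) hp
        · exact hf_inl w
        · rw [Finset.mem_erase, Finset.mem_erase] at hp
          obtain ⟨hj1, hj0, _⟩ := hp
          exfalso
          fin_cases j
          · exact hj0 rfl
          · exact hj1 rfl
      have h1P' : (Sum.inr 1 : W ⊕ Fin 2) ∈ (Finset.univ \ Pm).erase (Sum.inr 0) := by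
        rw [Finset.mem_erase]
        exact ⟨by simp, hP1⟩
      have hActP : activeVotes pref (Finset.univ \ Pm)
          (G.edgeFinset.card + k * (k - 1) / 2) (Finset.univ \ Pm)
          = (if G.edgeFinset.card + k * (k - 1) / 2 ≤ G.edgeFinset.card + bad then
              G.edgeFinset.card + bad else 0)
            + (G.edgeFinset.card + k * (k - 1) / 2) := by
        unfold activeVotes
        rw [← Finset.add_sum_erase _ _ h0P, ← Finset.add_sum_erase _ _ h1P',
          Finset.sum_eq_zero hPrest, hv0, hvo1', if_pos le_rfl, add_zero]
      by_cases hb : k * (k - 1) / 2 ≤ bad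
      · have hif : G.edgeFinset.card + k * (k - 1) / 2 ≤ G.edgeFinset.card + bad := by omega
        unfold activeFrac
        rw [hActA, hActP, if_pos hif]
        have hpos : (0 : ℚ) < ((G.edgeFinset.card + bad +
            (G.edgeFinset.card + k * (k - 1) / 2) : ℕ) : ℚ) := by
          have h5 : 0 < G.edgeFinset.card + bad + (G.edgeFinset.card + k * (k - 1) / 2) := by
            omega
          exact_mod_cast h5
        constructor
        · intro _
          exact ⟨h0, hb⟩
        · intro _
          rw [div_le_div_iff₀ (by norm_num) hpos]
          have hnat : 1 * (G.edgeFinset.card + bad +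
              (G.edgeFinset.card + k * (k - 1) / 2)) ≤ (G.edgeFinset.card + bad) * 2 := by
            omega
          exact_mod_cast hnat
      · have hif : ¬ (G.edgeFinset.card + k * (k - 1) / 2 ≤ G.edgeFinset.card + bad) := by
          omega
        unfold activeFrac
        rw [hActA, if_neg hif]
        simp only [Nat.cast_zero, zero_div]
        constructor
        · intro h
          norm_num at h
        · rintro ⟨-, hb'⟩
          exact absurd hb' hb
  constructor
  · rintro ⟨K, hKcard, hKclique⟩
    refine ⟨K.image Sum.inl, ?_, ?_, ?_⟩
    · intro p hp
      rw [Finset.mem_image] at hp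
      obtain ⟨w, _, rfl⟩ := hp
      exact Finset.mem_insert_of_mem (Finset.mem_image_of_mem _ (Finset.mem_univ w))
    · rw [Finset.card_image_of_injective _ Sum.inl_injective, hKcard]
    · rw [key _ (by
        intro p hp
        rw [Finset.mem_image] at hp
        obtain ⟨w, _, rfl⟩ := hp
        exact Finset.mem_insert_of_mem (Finset.mem_image_of_mem _ (Finset.mem_univ w)))]
      refine ⟨by simp, ?_⟩
      have hmem : ∀ w : W, Sum.inl w ∈ K.image (Sum.inl : W → W ⊕ Fin 2) ↔ w ∈ K := by
        intro w
        simp [Finset.mem_image]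
      have hcongr : (Finset.univ.filter fun e : ↥G.edgeFinset =>
          Sum.inl (x ↑e) ∈ K.image (Sum.inl : W → W ⊕ Fin 2) ∧
            Sum.inl (y ↑e) ∈ K.image (Sum.inl : W → W ⊕ Fin 2))
          = Finset.univ.filter fun e : ↥G.edgeFinset => x ↑e ∈ K ∧ y ↑e ∈ K := by
        apply Finset.filter_congr
        intro e _
        rw [hmem, hmem]
      rw [hcongr, card_filter_subtype G.edgeFinset (fun e => x e ∈ K ∧ y e ∈ K),
        clique_edges_eq G x y hxy hKclique,
        card_sym2_nondiag, hKcard]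
  · rintro ⟨Pm, hsub, hcard, hfrac⟩
    rw [key Pm hsub] at hfrac
    obtain ⟨h0, hbad⟩ := hfrac
    set D := Finset.univ.filter (fun w => Sum.inl w ∈ Pm) with hD
    have hmemD : ∀ w, w ∈ D ↔ Sum.inl w ∈ Pm := fun w => by simp [hD]
    have hPmD : Pm = D.image Sum.inl := by
      ext p
      constructor
      · intro hp
        have h2 := hsub hp
        rw [Finset.mem_insert] at h2
        rcases h2 with rfl | h2
        · exact absurd hp h0
        · rw [Finset.mem_image] at h2
          obtain ⟨w, _, rfl⟩ := h2
          exact Finset.mem_image_of_mem _ ((hmemD w).mpr hp)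
      · intro hp
        rw [Finset.mem_image] at hp
        obtain ⟨w, hw, rfl⟩ := hp
        exact (hmemD w).mp hw
    have hDcard : D.card ≤ k := by
      rw [hPmD, Finset.card_image_of_injective _ Sum.inl_injective] at hcard
      exact hcard
    have hb2 : k * (k - 1) / 2 ≤ (G.edgeFinset.filter fun e => x e ∈ D ∧ y e ∈ D).card := by
      rw [← card_filter_subtype]
      refine le_trans hbad (le_of_eq ?_)
      congr 1
      apply Finset.filter_congr
      intro e _
      rw [hmemD, hmemD]
    have hsub2 := edges_within_subset G x y hxy D
    have hle := Finset.card_le_card hsub2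
    rw [card_sym2_nondiag] at hle
    have hdk : D.card = k := arith_d_eq_k hk hDcard (le_trans hb2 hle)
    have hcard_nd : (D.sym2.filter fun e => ¬ e.IsDiag).card
        ≤ (G.edgeFinset.filter fun e => x e ∈ D ∧ y e ∈ D).card := by
      rw [card_sym2_nondiag, hdk]
      exact hb2
    have hseq := Finset.eq_of_subset_of_card_le hsub2 hcard_nd
    refine ⟨D, hdk, ?_⟩
    intro a ha b hb hab
    have hmem2 : s(a, b) ∈ D.sym2.filter fun e => ¬ e.IsDiag := by
      rw [Finset.mem_filter, Finset.mk_mem_sym2_iff]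
      exact ⟨⟨Finset.mem_coe.mp ha, Finset.mem_coe.mp hb⟩, by simp [Sym2.mk_isDiag_iff, hab]⟩
    rw [← hseq, Finset.mem_filter] at hmem2
    exact SimpleGraph.mem_edgeFinset.mp hmem2.1
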